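/- Splitting of small-step continuous transitions: if the HCSP process c in state s makes a small-step transition with wait event ⟨d, p, rdy⟩ to process c' and state s', and 0 < d' < d, then there exist c'' and s'' such that c in state s makes a small-step transition with wait event ⟨d', p, rdy⟩ to (c'', s''), and c'' in state s'' makes a small-step transition with wait event ⟨d−d', p(·+d'), rdy⟩ to (c', s'). -/

import Mathlib

set_option autoImplicit true

/-- A state of a sequential process: a valuation of program variables. -/
abbrev SState := String → ℝ

/-- States of (possibly parallel) processes: a state of a parallel process
`pc1 ∥_cs pc2` is the pair (disjoint union) of the states of its components. -/
inductive PState : Type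
  | base (s : SState)
  | pair (a b : PState)

/-- Channel directions appearing in ready sets. -/
inductive RdyEv : Type
  | rin  (ch : String)
  | rout (ch : String)

def compat (rdy1 rdy2 : Set RdyEv) : Prop :=
  ¬ ∃ ch : String,
      (RdyEv.rin ch ∈ rdy1 ∧ RdyEv.rout ch ∈ rdy2) ∨
      (RdyEv.rout ch ∈ rdy1 ∧ RdyEv.rin ch ∈ rdy2)

/-- Direction tags of communication events. -/
inductive Dir : Type
  | inp | outp | io

/-- Generalized events: communication events `⟨ch▷, v⟩`, wait events
`⟨d, p, rdy⟩`, infinite wait events `⟨∞, p, rdy⟩`, and the deadlock `δ`. -/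
inductive Ev : Type
  | comm (ch : String) (dir : Dir) (v : ℝ)
  | wait (d : ℝ) (p : ℝ → PState) (rdy : Set RdyEv)
  | waitInf (p : ℝ → PState) (rdy : Set RdyEv)
  | delta

/-- A communication occurring in an interrupt: input `ch?x` or output `ch!e`. -/
inductive CommDir : Type
  | recv (ch : String) (x : String)
  | send (ch : String) (e : SState → ℝ)

/-- HCSP processes. -/
inductive SProc : Type
  | skip
  | assign (x : String) (e : SState → ℝ)
  | input (ch : String) (x : String)
  | output (ch : String) (e : SState → ℝ)
  | ichoice (c1 c2 : SProc)
  | seq (c1 c2 : SProc)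
  | star (c : SProc)
  | cond (b : SState → Prop) (c1 c2 : SProc)
  | ode (f : SState → String → ℝ) (B : SState → Prop)
  | interrupt (f : SState → String → ℝ) (B : SState → Prop)
      (comms : List (CommDir × SProc))
  | par (c1 c2 : SProc) (cs : Set String)

/-- Update a state at one variable. -/
def update (s : SState) (x : String) (v : ℝ) : SState :=
  fun y => if y = x then v else s y

/-- `p` is a solution of the ODE whose vector field is `f`. -/
def Solution (f : SState → String → ℝ) (p : ℝ → SState) : Prop :=
  ∀ x t, HasDerivAt (fun τ => p τ x) (f (p t) x) t

/-- Ready set of an interrupt: the channel directions of its communications. -/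
def rdyOf (comms : List (CommDir × SProc)) : Set RdyEv :=
  { r | ∃ pr ∈ comms,
      (∃ ch x, pr.1 = CommDir.recv ch x ∧ r = RdyEv.rin ch) ∨
      (∃ ch e, pr.1 = CommDir.send ch e ∧ r = RdyEv.rout ch) }

/-- Small-step operational semantics `(c, s) →ᵉ (c', s')`; the event is
`none` for internal (τ) steps. -/
inductive Step : SProc → PState → Option Ev → SProc → PState → Prop
  | assignS {x e s} :
      Step (.assign x e) (.base s) none .skip (.base (update s x (e s)))
  | seqS1 {c1 c2 s ev c1' s'} : Step c1 s ev c1' s' →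
      Step (.seq c1 c2) s ev (.seq c1' c2) s'
  | seqS2 {c s} : Step (.seq .skip c) s none c s
  | condS1 {b c1 c2 s} : b s →
      Step (.cond b c1 c2) (.base s) none c1 (.base s)
  | condS2 {b c1 c2 s} : ¬ b s →
      Step (.cond b c1 c2) (.base s) none c2 (.base s)
  | outS1 {ch e s} :
      Step (.output ch e) (.base s) (some (.comm ch .outp (e s))) .skip (.base s)
  | outS2 {ch e s d} : 0 < d →
      Step (.output ch e) (.base s)
        (some (.wait d (fun _ => .base s) {RdyEv.rout ch})) (.output ch e) (.base s)
  | outS3 {ch e s} :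
      Step (.output ch e) (.base s)
        (some (.waitInf (fun _ => .base s) {RdyEv.rout ch})) .skip (.base s)
  | inS1 {ch x s v} :
      Step (.input ch x) (.base s) (some (.comm ch .inp v)) .skip (.base (update s x v))
  | inS2 {ch x s d} : 0 < d →
      Step (.input ch x) (.base s)
        (some (.wait d (fun _ => .base s) {RdyEv.rin ch})) (.input ch x) (.base s)
  | inS3 {ch x s} :
      Step (.input ch x) (.base s)
        (some (.waitInf (fun _ => .base s) {RdyEv.rin ch})) .skip (.base s)
  | repS1 {c s} : Step (.star c) s none .skip s
  | repS2 {c s ev c' s'} : Step c s ev c' s' →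
      Step (.star c) s ev (.seq c' (.star c)) s'
  | ichoiceS1 {c1 c2 s} : Step (.ichoice c1 c2) s none c1 s
  | ichoiceS2 {c1 c2 s} : Step (.ichoice c1 c2) s none c2 s
  | contS1 {f B s} : ¬ B s →
      Step (.ode f B) (.base s) none .skip (.base s)
  | contS2 {f B s p d} : Solution f p → p 0 = s → 0 < d →
      (∀ t, 0 ≤ t → t < d → B (p t)) →
      Step (.ode f B) (.base s)
        (some (.wait d (fun t => .base (p t)) ∅)) (.ode f B) (.base (p d))
  | intS1 {f B comms s p d} : Solution f p → p 0 = s → 0 < d →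
      (∀ t, 0 ≤ t → t < d → B (p t)) →
      Step (.interrupt f B comms) (.base s)
        (some (.wait d (fun t => .base (p t)) (rdyOf comms)))
        (.interrupt f B comms) (.base (p d))
  | intS2 {f B comms s} : ¬ B s →
      Step (.interrupt f B comms) (.base s) none .skip (.base s)
  | intS3 {f B comms s ch e ci} : (CommDir.send ch e, ci) ∈ comms →
      Step (.interrupt f B comms) (.base s)
        (some (.comm ch .outp (e s))) ci (.base s)
  | intS4 {f B comms s ch x ci v} : (CommDir.recv ch x, ci) ∈ comms →
      Step (.interrupt f B comms) (.base s)
        (some (.comm ch .inp v)) ci (.base (update s x v))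
  | parTauL {c1 c2 cs s1 s2 c1' s1'} : Step c1 s1 none c1' s1' →
      Step (.par c1 c2 cs) (.pair s1 s2) none (.par c1' c2 cs) (.pair s1' s2)
  | parTauR {c1 c2 cs s1 s2 c2' s2'} : Step c2 s2 none c2' s2' →
      Step (.par c1 c2 cs) (.pair s1 s2) none (.par c1 c2' cs) (.pair s1 s2')
  | parDelayS {c1 c2 cs s1 s2 c1' c2' s1' s2' d p1 p2 rdy1 rdy2} :
      compat rdy1 rdy2 →
      Step c1 s1 (some (.wait d p1 rdy1)) c1' s1' →
      Step c2 s2 (some (.wait d p2 rdy2)) c2' s2' →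
      Step (.par c1 c2 cs) (.pair s1 s2)
        (some (.wait d (fun t => .pair (p1 t) (p2 t)) (rdy1 ∪ rdy2)))
        (.par c1' c2' cs) (.pair s1' s2')
  | parPairS1 {c1 c2 cs s1 s2 c1' c2' s1' s2' ch v} : ch ∈ cs →
      Step c1 s1 (some (.comm ch .outp v)) c1' s1' →
      Step c2 s2 (some (.comm ch .inp v)) c2' s2' →
      Step (.par c1 c2 cs) (.pair s1 s2) (some (.comm ch .io v))
        (.par c1' c2' cs) (.pair s1' s2')
  | parPairS2 {c1 c2 cs s1 s2 c1' c2' s1' s2' ch v} : ch ∈ cs →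
      Step c1 s1 (some (.comm ch .inp v)) c1' s1' →
      Step c2 s2 (some (.comm ch .outp v)) c2' s2' →
      Step (.par c1 c2 cs) (.pair s1 s2) (some (.comm ch .io v))
        (.par c1' c2' cs) (.pair s1' s2')
  | parUnpairS1 {c1 c2 cs s1 s2 c1' s1' ch dir v} : ch ∉ cs →
      Step c1 s1 (some (.comm ch dir v)) c1' s1' →
      Step (.par c1 c2 cs) (.pair s1 s2) (some (.comm ch dir v))
        (.par c1' c2 cs) (.pair s1' s2)
  | parUnpairS2 {c1 c2 cs s1 s2 c2' s2' ch dir v} : ch ∉ cs →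
      Step c2 s2 (some (.comm ch dir v)) c2' s2' →
      Step (.par c1 c2 cs) (.pair s1 s2) (some (.comm ch dir v))
        (.par c1 c2' cs) (.pair s1 s2')

theorem Solution.shift {f : SState → String → ℝ} {p : ℝ → SState}
    (h : Solution f p) (a : ℝ) : Solution f (fun t => p (t + a)) := by
  intro x t
  have h1 : HasDerivAt (fun τ : ℝ => τ + a) 1 t := (hasDerivAt_id t).add_const a
  have := (h x (t + a)).comp t h1
  simp only [mul_one] at this
  exact this

/-- Splitting of small-step continuous transitions: if `(c, s)` makes a
small-step transition with wait event `⟨d, p, rdy⟩` to `(c', s')` and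
`0 < d' < d`, then there are `c''`, `s''` with a wait transition
`⟨d', p, rdy⟩` from `(c, s)` to `(c'', s'')` followed by a wait transition
`⟨d − d', p(·+d'), rdy⟩` from `(c'', s'')` to `(c', s')`. -/
theorem step_wait_split (c c' : SProc) (s s' : PState) (d d' : ℝ)
    (p : ℝ → PState) (rdy : Set RdyEv)
    (h : Step c s (some (Ev.wait d p rdy)) c' s')
    (h0 : 0 < d') (hd : d' < d) :
    ∃ c'' s'',
      Step c s (some (Ev.wait d' p rdy)) c'' s'' ∧
      Step c'' s'' (some (Ev.wait (d - d') (fun t => p (t + d')) rdy)) c' s' := by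
  generalize hev : some (Ev.wait d p rdy) = ev at h
  induction h generalizing d p rdy with
  | seqS1 h ih =>
      obtain ⟨c'', s'', h1, h2⟩ := ih _ _ _ hd hev
      exact ⟨_, _, Step.seqS1 h1, Step.seqS1 h2⟩
  | repS2 h ih =>
      obtain ⟨c'', s'', h1, h2⟩ := ih _ _ _ hd hev
      exact ⟨_, _, Step.repS2 h1, Step.seqS1 h2⟩
  | outS2 hpos =>
      obtain ⟨hd', hp, hrdy⟩ := Ev.wait.inj (Option.some.inj hev)
      subst hd' hp hrdy
      exact ⟨_, _, Step.outS2 h0, Step.outS2 (by linarith)⟩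
  | inS2 hpos =>
      obtain ⟨hd', hp, hrdy⟩ := Ev.wait.inj (Option.some.inj hev)
      subst hd' hp hrdy
      exact ⟨_, _, Step.inS2 h0, Step.inS2 (by linarith)⟩
  | @contS2 f B s pc dc hsol hp0 hdpos hB =>
      obtain ⟨hd', hp, hrdy⟩ := Ev.wait.inj (Option.some.inj hev)
      subst hd' hp hrdy
      refine ⟨_, _, Step.contS2 hsol hp0 h0 (fun t ht htd => hB t ht (by linarith)), ?_⟩
      have h2 := Step.contS2 (f := f) (B := B) (hsol.shift d') rfl
        (d := d - d') (by linarith)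
        (fun t ht htd => hB (t + d') (by linarith) (by linarith))
      simpa [sub_add_cancel] using h2
  | @intS1 f B comms s pc dc hsol hp0 hdpos hB =>
      obtain ⟨hd', hp, hrdy⟩ := Ev.wait.inj (Option.some.inj hev)
      subst hd' hp hrdy
      refine ⟨_, _, Step.intS1 hsol hp0 h0 (fun t ht htd => hB t ht (by linarith)), ?_⟩
      have h2 := Step.intS1 (f := f) (B := B) (comms := comms) (hsol.shift d') rfl
        (d := d - d') (by linarith)
        (fun t ht htd => hB (t + d') (by linarith) (by linarith))
      simpa [sub_add_cancel] using h2
  | parDelayS hcompat hstep1 hstep2 ih1 ih2 =>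
      obtain ⟨hd', hp, hrdy⟩ := Ev.wait.inj (Option.some.inj hev)
      subst hd' hp hrdy
      obtain ⟨c1'', s1'', h11, h12⟩ := ih1 _ _ _ hd rfl
      obtain ⟨c2'', s2'', h21, h22⟩ := ih2 _ _ _ hd rfl
      exact ⟨_, _, Step.parDelayS hcompat h11 h21, Step.parDelayS hcompat h12 h22⟩
  | _ => exact absurd hev (by simp)
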